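/- Let Q̂_{ISq,a}(k) = ∑_{n∈ℤ} Q_{ISq,a}(n)·cos(n·k) with Q_{ISq,a}(0) = 1 and Q_{ISq,a}(n) = a/n² for n ≠ 0, a > 0. Then: (i) if d ≥ 2 is an integer and 0 < a < (6/π²)·(d−1)/(d+2), then d·Q̂_{ISq,a}(k) > Q̂_{ISq,a}(0) for all k ∈ [0, π]; and (ii) if d ≥ 3 is an integer and a > (6/π²)·(d+1)/(d−2), then d·Q̂_{ISq,a}(π) < −Q̂_{ISq,a}(0). -/

import Mathlib

open Real

/-- Fourier transform of the inverse square transfer operator with parameter `a`: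
`Q(0) = 1`, `Q(n) = a/n²` for `n ≠ 0`. -/
noncomputable def isqFourier (a k : ℝ) : ℝ :=
  1 + ∑' n : {n : ℤ // n ≠ 0}, a / ((n : ℤ) : ℝ) ^ 2 * Real.cos ((n : ℤ) * k)

set_option maxHeartbeats 1000000 in
lemma isqFourier_eq (a : ℝ) {k : ℝ} (hk0 : 0 ≤ k) (hk1 : k ≤ 2 * π) :
    isqFourier a k = 1 + a * (k ^ 2 / 2 - π * k + π ^ 2 / 3) := by
  have hπ : (0:ℝ) < π := Real.pi_pos
  set x : ℝ := k / (2 * π) with hx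
  have hxI : x ∈ Set.Icc (0:ℝ) 1 := by
    constructor
    · positivity
    · rw [hx, div_le_one (by positivity)]; exact hk1
  have hS := hasSum_one_div_nat_pow_mul_cos (k := 1) one_ne_zero hxI
  have hB : (Polynomial.map (algebraMap ℚ ℝ) (Polynomial.bernoulli (2 * 1))).eval x
      = x ^ 2 - x + 1 / 6 := by
    norm_num
    simp [Polynomial.bernoulli, Finset.sum_range_succ, bernoulli_zero, bernoulli_one]
    norm_num [bernoulli]
    ring
  have hcos : ∀ n : ℕ, Real.cos (2 * π * n * x) = Real.cos (n * k) := by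
    intro n
    congr 1
    rw [hx]
    field_simp
  set S : ℝ := a * (π ^ 2 * (x ^ 2 - x + 1 / 6)) with hSdef
  have hval : a * ((-1 : ℝ) ^ (1 + 1) * (2 * π) ^ (2 * 1) / 2 / (2 * 1).factorial *
      (Polynomial.map (algebraMap ℚ ℝ) (Polynomial.bernoulli (2 * 1))).eval x) = S := by
    rw [hB, hSdef]
    have h2 : ((2 * 1).factorial : ℝ) = 2 := by norm_num [Nat.factorial]
    rw [h2]
    ring
  have hN : HasSum (fun n : ℕ => a / ((n:ℤ):ℝ) ^ 2 * Real.cos (((n:ℤ):ℝ) * k)) S := by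
    rw [← hval]
    have e : (fun n : ℕ => a / ((n:ℤ):ℝ) ^ 2 * Real.cos (((n:ℤ):ℝ) * k))
        = fun n : ℕ => a * (1 / (n:ℝ) ^ (2 * 1) * Real.cos (2 * π * n * x)) := by
      funext n
      push_cast
      rw [hcos n]
      ring
    rw [e]
    exact hS.mul_left a
  set f : ℤ → ℝ := fun n => a / ((n:ℤ):ℝ) ^ 2 * Real.cos ((n:ℝ) * k) with hf
  have hneg : HasSum (fun n : ℕ => f (-(n+1))) S := by
    have h1 : HasSum (fun n : ℕ => f ((n:ℕ) + 1 : ℕ))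
        (S - ∑ i ∈ Finset.range 1, f (i : ℕ)) :=
      (hasSum_nat_add_iff' (f := fun n : ℕ => f (n : ℕ)) 1).mpr hN
    have h0 : (∑ i ∈ Finset.range 1, f (i : ℕ)) = 0 := by
      simp [hf]
    rw [h0, sub_zero] at h1
    convert h1 using 2 with n
    simp only [hf]
    push_cast
    rw [neg_mul, Real.cos_neg, neg_pow]
    norm_num
  have hZ : HasSum f (S + S) := hN.of_nat_of_neg_add_one hneg
  have hsupp : Function.support f ⊆ {n : ℤ | n ≠ 0} := by
    intro n hn
    simp only [Function.mem_support, hf] at hn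
    intro h
    apply hn
    simp [h]
  have hsub : (∑' n : {n : ℤ // n ≠ 0}, f n) = S + S :=
    (tsum_subtype_eq_of_support_subset hsupp).trans hZ.tsum_eq
  show 1 + (∑' n : {n : ℤ // n ≠ 0}, f n) = _
  rw [hsub, hSdef, hx]
  field_simp
  ring

theorem stmt18 :
    (∀ d : ℕ, 2 ≤ d → ∀ a : ℝ, 0 < a →
      a < 6 / Real.pi ^ 2 * (((d : ℝ) - 1) / ((d : ℝ) + 2)) →
      ∀ k ∈ Set.Icc (0 : ℝ) Real.pi, (d : ℝ) * isqFourier a k > isqFourier a 0) ∧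
    (∀ d : ℕ, 3 ≤ d → ∀ a : ℝ, 0 < a →
      a > 6 / Real.pi ^ 2 * (((d : ℝ) + 1) / ((d : ℝ) - 2)) →
      (d : ℝ) * isqFourier a Real.pi < -isqFourier a 0) := by
  have hπ : (0:ℝ) < π := Real.pi_pos
  constructor
  · intro d hd a ha haub k hk
    obtain ⟨hk0, hk1⟩ := hk
    have hd2 : (2:ℝ) ≤ (d:ℝ) := by exact_mod_cast hd
    rw [isqFourier_eq a hk0 (by linarith), isqFourier_eq a le_rfl (by positivity)]
    have hub : a * (π ^ 2 * ((d:ℝ) + 2)) < 6 * ((d:ℝ) - 1) := by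
      have := (mul_lt_mul_of_pos_right haub (by positivity : (0:ℝ) < π ^ 2 * ((d:ℝ)+2)))
      calc a * (π ^ 2 * ((d:ℝ) + 2)) < 6 / π ^ 2 * (((d:ℝ) - 1) / ((d:ℝ) + 2)) * (π ^ 2 * ((d:ℝ)+2)) := this
        _ = 6 * ((d:ℝ) - 1) := by
            have hπne : π ≠ 0 := ne_of_gt hπ
            have hdne : (d:ℝ) + 2 ≠ 0 := by linarith
            field_simp
    nlinarith [sq_nonneg (k - π), mul_nonneg ha.le (sq_nonneg (k - π)),
      mul_le_mul_of_nonneg_right (mul_nonneg ha.le (sq_nonneg (k - π))) (by linarith : (0:ℝ) ≤ (d:ℝ) - 1)]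
  · intro d hd a ha halb
    have hd3 : (3:ℝ) ≤ (d:ℝ) := by exact_mod_cast hd
    rw [isqFourier_eq a hπ.le (by linarith), isqFourier_eq a le_rfl (by positivity)]
    have hlb : 6 * ((d:ℝ) + 1) < a * (π ^ 2 * ((d:ℝ) - 2)) := by
      have := (mul_lt_mul_of_pos_right halb (by nlinarith : (0:ℝ) < π ^ 2 * ((d:ℝ)-2)))
      calc 6 * ((d:ℝ) + 1) = 6 / π ^ 2 * (((d:ℝ) + 1) / ((d:ℝ) - 2)) * (π ^ 2 * ((d:ℝ)-2)) := by
            have hπne : π ≠ 0 := ne_of_gt hπ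
            have hdne : (d:ℝ) - 2 ≠ 0 := by linarith
            field_simp
        _ < a * (π ^ 2 * ((d:ℝ)-2)) := this
    nlinarith
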